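/- For every fixed r > 0, the function μ ↦ S_{μ+1}(r)/S_μ(r) is increasing on (0,∞). -/

import Mathlib

open Real

noncomputable def mathieuS (μ r : ℝ) : ℝ :=
  ∑' n : ℕ, (2 * ((n : ℝ) + 1)) / ((((n : ℝ) + 1) ^ 2 + r ^ 2) ^ (μ + 1))

noncomputable def zetaR (s : ℝ) : ℝ := ∑' n : ℕ, ((n : ℝ) + 1) ^ (-s)

namespace MathieuAux

noncomputable def qq (r : ℝ) (n : ℕ) : ℝ := ((n : ℝ) + 1) ^ 2 + r ^ 2

noncomputable def aa (μ r : ℝ) (n : ℕ) : ℝ :=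
  (2 * ((n : ℝ) + 1)) / (qq r n) ^ (μ + 1)

lemma qq_pos (r : ℝ) (n : ℕ) : 0 < qq r n := by
  have : (0:ℝ) < ((n : ℝ) + 1) ^ 2 := by positivity
  have : (0:ℝ) ≤ r ^ 2 := sq_nonneg r
  unfold qq; positivity

lemma aa_nonneg (μ r : ℝ) (n : ℕ) : 0 ≤ aa μ r n := by
  unfold aa
  have := (qq_pos r n)
  positivity

lemma aa_pos (μ r : ℝ) (n : ℕ) : 0 < aa μ r n := by
  unfold aa
  have := (qq_pos r n)
  positivity

lemma mathieuS_eq (μ r : ℝ) : mathieuS μ r = ∑' n : ℕ, aa μ r n := rfl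

lemma summable_aa (μ r : ℝ) (hμ : 0 < μ) : Summable (aa μ r) := by
  have hbig : Summable (fun n : ℕ => 2 * ((n : ℝ) + 1) ^ (-(2 * μ + 1))) := by
    apply Summable.mul_left
    have h1 : Summable (fun n : ℕ => (n : ℝ) ^ (-(2 * μ + 1))) :=
      Real.summable_nat_rpow.2 (by linarith)
    have := (summable_nat_add_iff 1).2 h1
    refine this.congr fun n => ?_
    push_cast
    ring_nf
  refine Summable.of_nonneg_of_le (fun n => aa_nonneg μ r n) (fun n => ?_) hbig
  have hn1 : (0:ℝ) < (n : ℝ) + 1 := by positivity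
  have hpow : ((n : ℝ) + 1) ^ (2 * μ + 2) ≤ (qq r n) ^ (μ + 1) := by
    have hbase : ((n : ℝ) + 1) ^ 2 ≤ qq r n := by
      unfold qq; nlinarith [sq_nonneg r]
    calc ((n : ℝ) + 1) ^ (2 * μ + 2) = (((n : ℝ) + 1) ^ 2) ^ (μ + 1) := by
          rw [← Real.rpow_natCast ((n:ℝ)+1) 2, ← Real.rpow_mul hn1.le]
          norm_num; ring_nf
      _ ≤ (qq r n) ^ (μ + 1) := by
          exact Real.rpow_le_rpow (by positivity) hbase (by linarith)
  have hposd : (0:ℝ) < ((n : ℝ) + 1) ^ (2 * μ + 2) := by positivity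
  have h2 : aa μ r n ≤ 2 * ((n : ℝ) + 1) / ((n : ℝ) + 1) ^ (2 * μ + 2) := by
    unfold aa
    exact div_le_div_of_nonneg_left (by positivity) hposd hpow
  refine h2.trans_eq ?_
  rw [show (2 : ℝ) * μ + 2 = 1 + (2 * μ + 1) by ring, Real.rpow_add hn1,
    Real.rpow_one, Real.rpow_neg hn1.le]
  field_simp

lemma mathieuS_pos (μ r : ℝ) (hμ : 0 < μ) : 0 < mathieuS μ r := by
  rw [mathieuS_eq]
  exact Summable.tsum_pos (summable_aa μ r hμ) (fun n => aa_nonneg μ r n) 0 (aa_pos μ r 0)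

lemma aa_add (σ δ r : ℝ) (n : ℕ) :
    aa (σ + δ) r n = aa σ r n * (qq r n) ^ (-δ) := by
  have hq := qq_pos r n
  unfold aa
  rw [show σ + δ + 1 = (σ + 1) + δ by ring, Real.rpow_add hq, Real.rpow_neg hq.le]
  field_simp

theorem key (r : ℝ) (hr : 0 < r) (μ ν : ℝ) (hμ : 0 < μ) (hμν : μ ≤ ν) :
    mathieuS (μ + 1) r * mathieuS ν r ≤ mathieuS μ r * mathieuS (ν + 1) r := by
  have hν : 0 < ν := lt_of_lt_of_le hμ hμν
  have hμ1 : 0 < μ + 1 := by linarith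
  have hν1 : 0 < ν + 1 := by linarith
  set F : ℕ × ℕ → ℝ := fun p => aa (μ + 1) r p.1 * aa ν r p.2 with hF_def
  set G : ℕ × ℕ → ℝ := fun p => aa μ r p.1 * aa (ν + 1) r p.2 with hG_def
  have hsum : ∀ σ, 0 < σ → Summable (fun n => ‖aa σ r n‖) := fun σ hσ => by
    simpa [Real.norm_eq_abs, abs_of_nonneg (aa_nonneg σ r _)] using summable_aa σ r hσ
  have hFsum : Summable F := summable_mul_of_summable_norm (hsum _ hμ1) (hsum _ hν)
  have hGsum : Summable G := summable_mul_of_summable_norm (hsum _ hμ) (hsum _ hν1)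
  have hFeq : mathieuS (μ + 1) r * mathieuS ν r = ∑' p, F p := by
    rw [mathieuS_eq, mathieuS_eq]
    exact tsum_mul_tsum_of_summable_norm (hsum _ hμ1) (hsum _ hν)
  have hGeq : mathieuS μ r * mathieuS (ν + 1) r = ∑' p, G p := by
    rw [mathieuS_eq, mathieuS_eq]
    exact tsum_mul_tsum_of_summable_norm (hsum _ hμ) (hsum _ hν1)
  -- symmetrized termwise inequality
  have pair : ∀ n m : ℕ, F (n, m) + F (m, n) ≤ G (n, m) + G (m, n) := by
    intro n m
    have hqn := qq_pos r n
    have hqm := qq_pos r m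
    set δ := ν - μ with hδ
    have hδ0 : 0 ≤ δ := by simp [hδ]; linarith
    have e1 : ∀ k, aa (μ + 1) r k = aa μ r k * (qq r k) ^ (-(1:ℝ)) := fun k =>
      aa_add μ 1 r k
    have e2 : ∀ k, aa ν r k = aa μ r k * (qq r k) ^ (-δ) := fun k => by
      rw [show ν = μ + δ by simp [hδ]]
      exact aa_add μ δ r k
    have e3 : ∀ k, aa (ν + 1) r k = aa μ r k * ((qq r k) ^ (-δ) * (qq r k) ^ (-(1:ℝ))) := by
      intro k
      rw [show ν + 1 = μ + (δ + 1) by simp [hδ]; ring, aa_add μ (δ+1) r k,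
        ← Real.rpow_add (qq_pos r k)]
      ring_nf
    have hprod : 0 ≤ ((qq r n) ^ (-(1:ℝ)) - (qq r m) ^ (-(1:ℝ))) *
        ((qq r n) ^ (-δ) - (qq r m) ^ (-δ)) := by
      rcases le_total (qq r n) (qq r m) with h | h
      · have h1 := Real.rpow_le_rpow_of_nonpos hqn h (by norm_num : (-(1:ℝ)) ≤ 0)
        have h2 := Real.rpow_le_rpow_of_nonpos hqn h (by linarith : -δ ≤ 0)
        exact mul_nonneg (by linarith) (by linarith)
      · have h1 := Real.rpow_le_rpow_of_nonpos hqm h (by norm_num : (-(1:ℝ)) ≤ 0)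
        have h2 := Real.rpow_le_rpow_of_nonpos hqm h (by linarith : -δ ≤ 0)
        have := mul_nonneg
          (by linarith : (0:ℝ) ≤ qq r m ^ (-(1:ℝ)) - qq r n ^ (-(1:ℝ)))
          (by linarith : (0:ℝ) ≤ qq r m ^ (-δ) - qq r n ^ (-δ))
        nlinarith
    have hK : 0 ≤ aa μ r n * aa μ r m := mul_nonneg (aa_nonneg _ _ _) (aa_nonneg _ _ _)
    simp only [hF_def, hG_def, e1, e2, e3]
    nlinarith [mul_nonneg hK hprod]
  have e : ℕ × ℕ ≃ ℕ × ℕ := Equiv.prodComm ℕ ℕ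
  have hFswap : Summable (fun p : ℕ × ℕ => F (p.2, p.1)) := by
    have := (Equiv.prodComm ℕ ℕ).summable_iff.2 hFsum
    exact this
  have hGswap : Summable (fun p : ℕ × ℕ => G (p.2, p.1)) := by
    have := (Equiv.prodComm ℕ ℕ).summable_iff.2 hGsum
    exact this
  have hFswapeq : ∑' p : ℕ × ℕ, F (p.2, p.1) = ∑' p, F p := by
    have := (Equiv.prodComm ℕ ℕ).tsum_eq F
    exact this
  have hGswapeq : ∑' p : ℕ × ℕ, G (p.2, p.1) = ∑' p, G p := by
    have := (Equiv.prodComm ℕ ℕ).tsum_eq G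
    exact this
  have hdouble : (2:ℝ) * ∑' p, F p ≤ 2 * ∑' p, G p := by
    have hFsum2 : Summable (fun p : ℕ × ℕ => F p + F (p.2, p.1)) := hFsum.add hFswap
    have hGsum2 : Summable (fun p : ℕ × ℕ => G p + G (p.2, p.1)) := hGsum.add hGswap
    have h := Summable.tsum_le_tsum (f := fun p : ℕ × ℕ => F p + F (p.2, p.1))
      (g := fun p : ℕ × ℕ => G p + G (p.2, p.1))
      (fun p => pair p.1 p.2) hFsum2 hGsum2
    rw [Summable.tsum_add hFsum hFswap, Summable.tsum_add hGsum hGswap, hFswapeq, hGswapeq] at h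
    linarith
  rw [hFeq, hGeq]
  linarith

end MathieuAux

theorem stmt3 (r : ℝ) (hr : 0 < r) (μ ν : ℝ) (hμ : 0 < μ) (hμν : μ ≤ ν) :
    mathieuS (μ + 1) r / mathieuS μ r ≤ mathieuS (ν + 1) r / mathieuS ν r := by
  have hν : 0 < ν := lt_of_lt_of_le hμ hμν
  have h1 := MathieuAux.mathieuS_pos μ r hμ
  have h2 := MathieuAux.mathieuS_pos ν r hν
  rw [div_le_div_iff₀ h1 h2]
  have := MathieuAux.key r hr μ ν hμ hμν
  linarith [MathieuAux.key r hr μ ν hμ hμν]
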